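/- Let F be an m×n complex matrix, let G be the (m+n)×n matrix obtained by stacking F on top of the n×n identity matrix, and let G = U T V* be a factorization in which U ((m+n)×(m+n)) and V (n×n) are unitary and T is generalized upper-triangular with positive real diagonal entries. Let W be the m×n submatrix of U formed by its first m rows and first n columns, and set T̃ = W* F V. Then for every j = 1, …, n: |T̃_{jj}|² = ((T_{jj})² − 1) · ( (W*W)_{jj} + ∑_{l=1}^{j−1} |T̃_{j,l}|² ). Equivalently, whenever the second factor is positive, the signal-to-interference-and-noise ratio S_j = |T̃_{jj}|² / ((W*W)_{jj} + ∑_{l=1}^{j−1} |T̃_{j,l}|²) of the j-th subchannel of the MMSE successive interference cancellation receiver satisfies 1 + S_j = (T_{jj})². -/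

import Mathlib

open Matrix BigOperators Finset
open scoped ComplexOrder

namespace NetMod

/-- A square complex matrix is unitary. -/
def IsUnitary {k : ℕ} (U : Matrix (Fin k) (Fin k) ℂ) : Prop := Uᴴ * U = 1

/-- A generalized upper-triangular matrix: entry (i,j) vanishes whenever i > j. -/
def GenUpperTri {m n : ℕ} (T : Matrix (Fin m) (Fin n) ℂ) : Prop :=
  ∀ (i : Fin m) (j : Fin n), (j : ℕ) < (i : ℕ) → T i j = 0

/-- The diagonal entries of a (tall) matrix are positive reals. -/
def PosRealDiag {m n : ℕ} (h : n ≤ m) (T : Matrix (Fin m) (Fin n) ℂ) : Prop :=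
  ∀ j : Fin n, 0 < (T (Fin.castLE h j) j).re ∧ (T (Fin.castLE h j) j).im = 0

/-- Joint unitary triangularization of the pair (A1, A2). -/
def JointTriang {m1 m2 n : ℕ}
    (A1 : Matrix (Fin m1) (Fin n) ℂ) (A2 : Matrix (Fin m2) (Fin n) ℂ)
    (U1 : Matrix (Fin m1) (Fin m1) ℂ) (U2 : Matrix (Fin m2) (Fin m2) ℂ)
    (V : Matrix (Fin n) (Fin n) ℂ)
    (T1 : Matrix (Fin m1) (Fin n) ℂ) (T2 : Matrix (Fin m2) (Fin n) ℂ) : Prop :=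
  IsUnitary U1 ∧ IsUnitary U2 ∧ IsUnitary V ∧
  GenUpperTri T1 ∧ GenUpperTri T2 ∧
  A1 = U1 * T1 * Vᴴ ∧ A2 = U2 * T2 * Vᴴ

/-- `μ` is the generalized-singular-value vector of the pair (A1, A2): it is
nonincreasing, positive, and its squared entries are exactly the solutions, with
algebraic multiplicity, of `det(A1ᴴA1 − x · A2ᴴA2) = 0` (expressed by the
polynomial identity `det(A1ᴴA1 − x A2ᴴA2) = det(A2ᴴA2) ∏ⱼ (μⱼ² − x)`). -/
def IsGSV {m1 m2 n : ℕ}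
    (A1 : Matrix (Fin m1) (Fin n) ℂ) (A2 : Matrix (Fin m2) (Fin n) ℂ)
    (μ : Fin n → ℝ) : Prop :=
  Antitone μ ∧ (∀ j, 0 < μ j) ∧
  ∀ x : ℂ, (A1ᴴ * A1 - x • (A2ᴴ * A2)).det = (A2ᴴ * A2).det * ∏ j, ((μ j : ℂ) ^ 2 - x)

/-- The vector `x` sorted in nonincreasing order. -/
noncomputable def sortDesc {n : ℕ} (x : Fin n → ℝ) : Fin n → ℝ :=
  fun i => x (Tuple.sort x i.rev)

/-- Product of the first `k` entries of `x`. -/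
def PProd {n : ℕ} (x : Fin n → ℝ) (k : ℕ) : ℝ :=
  ∏ j ∈ Finset.univ.filter (fun j : Fin n => (j : ℕ) < k), x j

/-- Multiplicative majorization: equal total products, and every partial product of
the nonincreasingly sorted `x` dominates that of the sorted `y`. -/
def MulMaj {n : ℕ} (x y : Fin n → ℝ) : Prop :=
  (∏ j, x j = ∏ j, y j) ∧
  ∀ k : ℕ, 1 ≤ k → k < n → PProd (sortDesc y) k ≤ PProd (sortDesc x) k

/-- Stacking `F` on top of the `n × n` identity matrix. -/
def augment {m n : ℕ} (F : Matrix (Fin m) (Fin n) ℂ) : Matrix (Fin (m + n)) (Fin n) ℂ :=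
  Matrix.of fun i j => if h : (i : ℕ) < m then F ⟨i, h⟩ j
    else if (i : ℕ) = m + (j : ℕ) then 1 else 0

/-- The top `n × n` square part of a tall matrix. -/
def squarePart {m n : ℕ} (h : n ≤ m) (T : Matrix (Fin m) (Fin n) ℂ) :
    Matrix (Fin n) (Fin n) ℂ :=
  T.submatrix (Fin.castLE h) id

/-- A 2-vector is mixed if one entry is at least 1 and the other at most 1. -/
def Mixed (μ : Fin 2 → ℝ) : Prop := (μ 0 ≤ 1 ∧ 1 ≤ μ 1) ∨ (μ 1 ≤ 1 ∧ 1 ≤ μ 0)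

end NetMod
section Aux

open Matrix Finset

private lemma sum_castLE_of_vanish {m n : ℕ} (f : Fin (m + n) → ℂ)
    (hf : ∀ k : Fin (m + n), n ≤ (k : ℕ) → f k = 0) :
    ∑ k, f k = ∑ j : Fin n, f (Fin.castLE (Nat.le_add_left n m) j) := by
  classical
  have hsub : ∑ k ∈ (univ : Finset (Fin n)).map (Fin.castLEEmb (Nat.le_add_left n m)), f k
      = ∑ k, f k := by
    apply Finset.sum_subset (Finset.subset_univ _)
    intro k _ hk
    apply hf
    by_contra h
    push_neg at h
    exact hk (Finset.mem_map.mpr ⟨⟨(k : ℕ), h⟩, Finset.mem_univ _, by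
      simp [Fin.castLEEmb, Fin.ext_iff]⟩)
  rw [← hsub, Finset.sum_map]
  rfl

private lemma sum_split_lt {n : ℕ} (j : Fin n) (f : Fin n → ℝ)
    (hf : ∀ k, j < k → f k = 0) :
    ∑ k, f k = f j + ∑ k ∈ Finset.univ.filter (fun k => k < j), f k := by
  classical
  rw [← Finset.sum_filter_add_sum_filter_not Finset.univ (fun k => k < j) f]
  have h2 : ∑ k ∈ Finset.univ.filter (fun k => ¬ k < j), f k = f j := by
    refine Finset.sum_eq_single_of_mem j (by simp) ?_
    intro k hk hkj
    simp only [Finset.mem_filter] at hk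
    exact hf k (lt_of_le_of_ne (le_of_not_gt hk.2) (Ne.symm hkj))
  rw [h2]; ring

end Aux

/-- Proposition 1. For the MMSE-SIC receiver built from a unitary
triangularization `[F; I] = U T Vᴴ`, the SINR of the `j`-th stream satisfies
`1 + Sⱼ = (Tⱼⱼ)²`. -/
theorem mmse_sic_sinr
    {m n : ℕ} (F : Matrix (Fin m) (Fin n) ℂ)
    (U : Matrix (Fin (m + n)) (Fin (m + n)) ℂ) (V : Matrix (Fin n) (Fin n) ℂ)
    (T : Matrix (Fin (m + n)) (Fin n) ℂ)
    (hU : NetMod.IsUnitary U) (hV : NetMod.IsUnitary V)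
    (hT : NetMod.GenUpperTri T)
    (hTd : NetMod.PosRealDiag (Nat.le_add_left n m) T)
    (hdec : NetMod.augment F = U * T * Vᴴ)
    (W : Matrix (Fin m) (Fin n) ℂ)
    (hW : W = Matrix.of fun (i : Fin m) (j : Fin n) =>
      U (Fin.castLE (Nat.le_add_right m n) i) (Fin.castLE (Nat.le_add_left n m) j))
    (Ttil : Matrix (Fin n) (Fin n) ℂ) (hTtil : Ttil = Wᴴ * F * V) :
    ∀ j : Fin n,
      (Complex.normSq (Ttil j j)
        = ((T (Fin.castLE (Nat.le_add_left n m) j) j).re ^ 2 - 1) *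
          (((Wᴴ * W) j j).re
            + ∑ l ∈ Finset.univ.filter (fun l : Fin n => l < j),
                Complex.normSq (Ttil j l))) ∧
      (0 < ((Wᴴ * W) j j).re
            + ∑ l ∈ Finset.univ.filter (fun l : Fin n => l < j),
                Complex.normSq (Ttil j l) →
        1 + Complex.normSq (Ttil j j) /
            (((Wᴴ * W) j j).re
              + ∑ l ∈ Finset.univ.filter (fun l : Fin n => l < j),
                  Complex.normSq (Ttil j l))
          = (T (Fin.castLE (Nat.le_add_left n m) j) j).re ^ 2) := by
  classical
  set c : Fin n → Fin (m + n) := Fin.castLE (Nat.le_add_left n m) with hc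
  have hcval : ∀ j : Fin n, ((c j : Fin (m+n)) : ℕ) = (j : ℕ) := fun j => rfl
  set B : Matrix (Fin n) (Fin n) ℂ :=
    Matrix.of (fun p j => U (Fin.natAdd m p) (c j)) with hBdef
  set Tsq : Matrix (Fin n) (Fin n) ℂ := Matrix.of (fun a b => T (c a) b) with hTsqdef
  have hUU := hU
  unfold NetMod.IsUnitary at hUU
  have hVV := hV
  unfold NetMod.IsUnitary at hVV
  -- G V = U T
  have hGV : NetMod.augment F * V = U * T := by
    rw [hdec, Matrix.mul_assoc, Matrix.mul_assoc, hVV, Matrix.mul_one]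
  -- bottom rows of G V are V
  have hbot : ∀ (p l : Fin n), (NetMod.augment F * V) (Fin.natAdd m p) l = V p l := by
    intro p l
    rw [Matrix.mul_apply]
    have : ∀ k : Fin n, (NetMod.augment F) (Fin.natAdd m p) k = if p = k then 1 else 0 := by
      intro k
      simp only [NetMod.augment, Matrix.of_apply, Fin.natAdd]
      rw [dif_neg (by simp)]
      by_cases h : p = k
      · subst h; simp
      · rw [if_neg (fun hh => h (Fin.ext (by simpa using hh))), if_neg h]
    simp only [this]
    rw [Finset.sum_eq_single p (fun k _ hk => by rw [if_neg (Ne.symm hk), zero_mul])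
      (fun h => absurd (Finset.mem_univ p) h), if_pos rfl, one_mul]
  -- top rows of G are F
  have htopG : ∀ (i : Fin m) (k : Fin n),
      (NetMod.augment F) (Fin.castAdd n i) k = F i k := by
    intro i k
    simp only [NetMod.augment, Matrix.of_apply, Fin.castAdd]
    rw [dif_pos (by exact i.isLt)]
    rfl
  -- V = B * Tsq
  have hVBT : V = B * Tsq := by
    ext p l
    have h1 : (NetMod.augment F * V) (Fin.natAdd m p) l = (U * T) (Fin.natAdd m p) l := by
      rw [hGV]
    rw [hbot] at h1
    rw [h1, Matrix.mul_apply, Matrix.mul_apply]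
    rw [sum_castLE_of_vanish (fun k => U (Fin.natAdd m p) k * T k l)
      (fun k hk => by
        show U (Fin.natAdd m p) k * T k l = 0
        rw [hT k l (by have := l.isLt; omega)]; ring)]
    rfl
  -- Tsq is upper triangular with unit determinant
  have hTri : Tsq.BlockTriangular id := by
    intro a b hab
    exact hT (c a) b hab
  have hTsqdiag : ∀ jj : Fin n, Tsq jj jj = ((T (c jj) jj).re : ℂ) := by
    intro jj
    have := hTd jj
    apply Complex.ext <;> simp [hTsqdef, hc, this.2]
  have hdetU : IsUnit Tsq.det := by
    rw [Matrix.det_of_upperTriangular hTri]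
    rw [isUnit_iff_ne_zero]
    rw [Finset.prod_ne_zero_iff]
    intro jj _
    rw [hTsqdiag jj]
    exact_mod_cast ne_of_gt (hTd jj).1
  haveI : Invertible Tsq := Tsq.invertibleOfIsUnitDet hdetU
  have hTsqInv : Tsq * Tsq⁻¹ = 1 := Matrix.mul_nonsing_inv _ hdetU
  -- B = V * Tsq⁻¹
  have hBV : B = V * Tsq⁻¹ := by
    calc B = B * (Tsq * Tsq⁻¹) := by rw [hTsqInv, Matrix.mul_one]
    _ = (B * Tsq) * Tsq⁻¹ := by rw [Matrix.mul_assoc]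
    _ = V * Tsq⁻¹ := by rw [← hVBT]
  have hBHV : Bᴴ * V = (Tsq⁻¹)ᴴ := by
    rw [hBV, Matrix.conjTranspose_mul, Matrix.mul_assoc, hVV, Matrix.mul_one]
  have hBHB : Bᴴ * B = (Tsq⁻¹)ᴴ * Tsq⁻¹ := by
    rw [hBV, Matrix.conjTranspose_mul, Matrix.mul_assoc, ← Matrix.mul_assoc Vᴴ, hVV,
      Matrix.one_mul]
  -- the key entrywise identity T (c j) l = Ttil j l + (Tsq⁻¹)ᴴ j l
  have hcast : ∀ i : Fin m, Fin.castAdd n i = Fin.castLE (Nat.le_add_right m n) i :=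
    fun i => rfl
  have key : ∀ (j l : Fin n), T (c j) l = Ttil j l + (Tsq⁻¹)ᴴ j l := by
    intro j l
    have h0 : T (c j) l = (Uᴴ * (U * T)) (c j) l := by
      rw [← Matrix.mul_assoc, hUU, Matrix.one_mul]
    rw [h0, Matrix.mul_apply, Fin.sum_univ_add
      (f := fun r => Uᴴ (c j) r * (U * T) r l)]
    have htop : ∀ i : Fin m,
        Uᴴ (c j) (Fin.castAdd n i) * (U * T) (Fin.castAdd n i) l
          = (starRingEnd ℂ) (W i j) * (F * V) i l := by
      intro i
      congr 1
      · rw [Matrix.conjTranspose_apply, hW, hcast i]; rfl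
      · have h1 : (U * T) (Fin.castAdd n i) l
            = (NetMod.augment F * V) (Fin.castAdd n i) l := by rw [hGV]
        rw [h1, Matrix.mul_apply, Matrix.mul_apply]
        refine Finset.sum_congr rfl fun k _ => ?_
        rw [htopG i k]
    have hbot' : ∀ p : Fin n,
        Uᴴ (c j) (Fin.natAdd m p) * (U * T) (Fin.natAdd m p) l
          = (starRingEnd ℂ) (B p j) * V p l := by
      intro p
      congr 1
      have h1 : (U * T) (Fin.natAdd m p) l
          = (NetMod.augment F * V) (Fin.natAdd m p) l := by rw [hGV]
      rw [h1, hbot]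
    rw [Finset.sum_congr rfl (fun i _ => htop i),
        Finset.sum_congr rfl (fun p _ => hbot' p)]
    congr 1
    · rw [hTtil, Matrix.mul_assoc, Matrix.mul_apply]
      rfl
    · rw [← hBHV, Matrix.mul_apply]
      rfl
  -- triangularity of the inverse
  have hInvTri : (Tsq⁻¹).BlockTriangular id :=
    Matrix.blockTriangular_inv_of_blockTriangular hTri
  -- diagonal of the inverse
  have hInvDiag : ∀ jj : Fin n, Tsq⁻¹ jj jj = (Tsq jj jj)⁻¹ := by
    intro jj
    have h1 : (Tsq * Tsq⁻¹) jj jj = 1 := by rw [hTsqInv]; simp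
    rw [Matrix.mul_apply] at h1
    have h2 : ∑ k, Tsq jj k * Tsq⁻¹ k jj = Tsq jj jj * Tsq⁻¹ jj jj :=
      Finset.sum_eq_single jj
        (fun k _ hk => by
          show Tsq jj k * Tsq⁻¹ k jj = 0
          rcases lt_or_gt_of_ne hk with h | h
          · rw [hTri (show (id k : Fin n) < id jj from h)]; ring
          · rw [hInvTri (show (id jj : Fin n) < id k from h)]; ring)
        (fun h => absurd (Finset.mem_univ jj) h)
    rw [h2] at h1
    exact eq_inv_of_mul_eq_one_right h1
  -- orthonormality: (WᴴW)jj + (BᴴB)jj = 1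
  have hWB : ∀ j : Fin n, (Wᴴ * W) j j + (Bᴴ * B) j j = 1 := by
    intro j
    have h1 : (Uᴴ * U) (c j) (c j) = 1 := by rw [hUU]; simp
    rw [Matrix.mul_apply, Fin.sum_univ_add
      (f := fun r => Uᴴ (c j) r * U r (c j))] at h1
    rw [← h1, Matrix.mul_apply, Matrix.mul_apply]
    congr 1
    · refine Finset.sum_congr rfl fun i _ => ?_
      rw [Matrix.conjTranspose_apply, Matrix.conjTranspose_apply, hW, hcast i]
      rfl
  -- now fix j
  intro j
  set t : ℝ := (T (c j) j).re with htdef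
  have ht : 0 < t := (hTd j).1
  have ht0 : t ≠ 0 := ne_of_gt ht
  have hTsqjj : Tsq j j = (t : ℂ) := hTsqdiag j
  have hInvjj : Tsq⁻¹ j j = ((t⁻¹ : ℝ) : ℂ) := by
    rw [hInvDiag j, hTsqjj]; push_cast; ring
  -- diagonal of Ttil
  have hTtiljj : Ttil j j = ((t - t⁻¹ : ℝ) : ℂ) := by
    have h1 := key j j
    have h2 : (Tsq⁻¹)ᴴ j j = ((t⁻¹ : ℝ) : ℂ) := by
      rw [Matrix.conjTranspose_apply, hInvjj]
      exact Complex.conj_ofReal _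
    have h3 : T (c j) j = (t : ℝ) := hTsqjj
    rw [h3, h2] at h1
    have : Ttil j j = (t : ℂ) - ((t⁻¹ : ℝ) : ℂ) := by linear_combination -h1
    rw [this]; push_cast; ring
  -- strictly-lower entries of Ttil
  have hTtillt : ∀ l : Fin n, l < j →
      Ttil j l = -((starRingEnd ℂ) (Tsq⁻¹ l j)) := by
    intro l hl
    have h1 := key j l
    have h2 : T (c j) l = 0 := hT (c j) l hl
    have h3 : (Tsq⁻¹)ᴴ j l = (starRingEnd ℂ) (Tsq⁻¹ l j) := rfl
    rw [h2, h3] at h1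
    linear_combination -h1
  -- the sum S
  set S : ℝ := ∑ l ∈ Finset.univ.filter (fun l : Fin n => l < j),
      Complex.normSq (Ttil j l) with hSdef
  have hS : S = ∑ l ∈ Finset.univ.filter (fun l : Fin n => l < j),
      Complex.normSq (Tsq⁻¹ l j) := by
    refine Finset.sum_congr rfl fun l hl => ?_
    rw [hTtillt l (by simpa using hl)]
    simp
  -- (BᴴB)jj as a real number
  have hBBjj : (Bᴴ * B) j j = ((t⁻¹ * t⁻¹ + S : ℝ) : ℂ) := by
    rw [hBHB, Matrix.mul_apply]
    have h1 : ∀ k : Fin n, (Tsq⁻¹)ᴴ j k * Tsq⁻¹ k j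
        = ((Complex.normSq (Tsq⁻¹ k j) : ℝ) : ℂ) := by
      intro k
      rw [Matrix.conjTranspose_apply, mul_comm]
      exact Complex.mul_conj _
    rw [Finset.sum_congr rfl (fun k _ => h1 k), ← Complex.ofReal_sum]
    rw [sum_split_lt j (fun k => Complex.normSq (Tsq⁻¹ k j))
      (fun k hk => by
        show Complex.normSq (Tsq⁻¹ k j) = 0
        rw [hInvTri (show (id j : Fin n) < id k from hk)]; simp)]
    rw [hInvjj, hS, Complex.normSq_ofReal]
  -- real part of (WᴴW)jj
  have hWWre : ((Wᴴ * W) j j).re = 1 - t⁻¹ * t⁻¹ - S := by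
    have h1 := hWB j
    rw [hBBjj] at h1
    have h2 : (Wᴴ * W) j j = 1 - ((t⁻¹ * t⁻¹ + S : ℝ) : ℂ) := by
      linear_combination h1
    rw [h2]
    simp
    ring
  -- normSq of the diagonal
  have hNjj : Complex.normSq (Ttil j j) = (t - t⁻¹) * (t - t⁻¹) := by
    rw [hTtiljj, Complex.normSq_ofReal]
  -- main computation
  have hmain : Complex.normSq (Ttil j j)
      = (t ^ 2 - 1) * (((Wᴴ * W) j j).re + S) := by
    rw [hNjj, hWWre]
    field_simp
    ring
  refine ⟨hmain, ?_⟩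
  intro hpos
  rw [hmain, mul_div_assoc, div_self (ne_of_gt hpos), mul_one]
  ring
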